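/- Let A be an A∞-algebra over a commutative ring, B an A∞-algebra, and M an A-B bimodule. Define the triangle algebra T(M) = A ⊕ M[-1] ⊕ B with operations given by μ_A on pure A-inputs, μ_B on pure B-inputs, the bimodule operations when exactly one input is in M, and zero otherwise. Then T(M) satisfies the A∞-equations. -/

import Mathlib

/-!  A sign-explicit, coordinate-free-on-elements model of (curved) `A∞`-algebras.
The Koszul signs of the `A∞`-equations
`∑ (-1)^{✠} μ^{k-j+1}(a_1,…,a_i, μ^j(a_{i+1},…,a_{i+j}), a_{i+j+1},…,a_k) = 0`
are encoded by a "sign operator" `σ` (on homogeneous elements of degree `d`, `σ` is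
multiplication by `(-1)^{d+1}`) applied to the inputs to the left of the inner
operation. -/

/-- The vector of inputs for the term of the `A∞`-equation in which `μ^j` is applied
to the `j` consecutive inputs starting at position `i`, the sign operator `σ` being
applied to the inputs to the left. -/
def aInfComb {V : Type*} (μ : ∀ k : ℕ, (Fin k → V) → V) (σ : V → V) {k : ℕ}
    (a : Fin k → V) (i j : ℕ) (h : i + j ≤ k) : Fin (k - j + 1) → V :=
  fun m =>
    if hm : (m : ℕ) < i then σ (a ⟨(m : ℕ), by have := m.isLt; omega⟩)
    else if hm' : (m : ℕ) = i then
      μ j (fun r => a ⟨i + (r : ℕ), by have := r.isLt; omega⟩)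
    else a ⟨(m : ℕ) + j - 1, by have := m.isLt; omega⟩

/-- The left-hand side of the `A∞`-equation with inputs `a : Fin k → V`. -/
def aInfSum {V : Type*} [AddCommGroup V] (μ : ∀ k : ℕ, (Fin k → V) → V) (σ : V → V)
    (k : ℕ) (a : Fin k → V) : V :=
  ∑ j ∈ Finset.range (k + 1), ∑ i ∈ Finset.range (k + 1),
    if h : i + j ≤ k then μ (k - j + 1) (aInfComb μ σ a i j h) else 0

/-- The `A∞`-equations for the operations `μ` with sign operator `σ`. -/
def AInfEq {V : Type*} [AddCommGroup V] (μ : ∀ k : ℕ, (Fin k → V) → V) (σ : V → V) :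
    Prop :=
  ∀ (k : ℕ) (a : Fin k → V), aInfSum μ σ k a = 0

/-- The operations of the triangle algebra `T(M) = A ⊕ M[-1] ⊕ B`: `μ_A` on pure
`A`-inputs, `μ_B` on pure `B`-inputs, the bimodule operations when exactly one input is
in `M` (with `A`-inputs before and `B`-inputs after), and zero otherwise; extended
multilinearly to the direct sum. -/
def triMu {A M B : Type*} [AddCommGroup A] [AddCommGroup M] [AddCommGroup B]
    (μA : ∀ k : ℕ, (Fin k → A) → A) (μB : ∀ k : ℕ, (Fin k → B) → B)
    (μM : ∀ i j : ℕ, (Fin i → A) → M → (Fin j → B) → M) :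
    ∀ k : ℕ, (Fin k → A × M × B) → A × M × B :=
  fun k v =>
    (μA k (fun i => (v i).1),
     ∑ p : Fin k, μM (p : ℕ) (k - 1 - (p : ℕ))
       (fun r => (v ⟨(r : ℕ), by have := r.isLt; have := p.isLt; omega⟩).1)
       ((v p).2.1)
       (fun r => (v ⟨(p : ℕ) + 1 + (r : ℕ), by have := r.isLt; have := p.isLt; omega⟩).2.2),
     μB k (fun i => (v i).2.2))

/-- The sign operator on the triangle algebra, acting componentwise. -/
def triSigma {A M B : Type*} (σA : A → A) (σM : M → M) (σB : B → B) :
    A × M × B → A × M × B :=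
  fun x => (σA x.1, σM x.2.1, σB x.2.2)

/-- The element of `T(M)` with `A`-inputs `as`, one `M`-input `m` in position `i`, and
`B`-inputs `bs`. -/
def pureInput {A M B : Type*} [AddCommGroup A] [AddCommGroup M] [AddCommGroup B]
    (i j : ℕ) (as : Fin i → A) (m : M) (bs : Fin j → B) : Fin (i + 1 + j) → A × M × B :=
  fun p =>
    if hp : (p : ℕ) < i then (as ⟨(p : ℕ), hp⟩, 0, 0)
    else if hp' : (p : ℕ) = i then (0, m, 0)
    else (0, 0, bs ⟨(p : ℕ) - i - 1, by have := p.isLt; omega⟩)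
section TriangleAux

variable {A M B : Type*} [AddCommGroup A] [AddCommGroup M] [AddCommGroup B]
  (μA : ∀ k : ℕ, (Fin k → A) → A) (μB : ∀ k : ℕ, (Fin k → B) → B)
  (μM : ∀ i j : ℕ, (Fin i → A) → M → (Fin j → B) → M)
  (σA : A → A) (σM : M → M) (σB : B → B)

private lemma tri_fst_comb {k : ℕ} (a : Fin k → A × M × B) (i j : ℕ) (h : i + j ≤ k)
    (m : Fin (k - j + 1)) :
    (aInfComb (triMu μA μB μM) (triSigma σA σM σB) a i j h m).1
      = aInfComb μA σA (fun q => (a q).1) i j h m := by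
  unfold aInfComb
  split_ifs <;> rfl

private lemma tri_snd_comb {k : ℕ} (a : Fin k → A × M × B) (i j : ℕ) (h : i + j ≤ k)
    (m : Fin (k - j + 1)) :
    (aInfComb (triMu μA μB μM) (triSigma σA σM σB) a i j h m).2.2
      = aInfComb μB σB (fun q => (a q).2.2) i j h m := by
  unfold aInfComb
  split_ifs <;> rfl

private lemma sum_fst {ι : Type*} (s : Finset ι) (f : ι → A × M × B) :
    (∑ x ∈ s, f x).1 = ∑ x ∈ s, (f x).1 :=
  map_sum (AddMonoidHom.fst A (M × B)) f s

private lemma sum_snd1 {ι : Type*} (s : Finset ι) (f : ι → A × M × B) :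
    (∑ x ∈ s, f x).2.1 = ∑ x ∈ s, (f x).2.1 :=
  map_sum ((AddMonoidHom.fst M B).comp (AddMonoidHom.snd A (M × B))) f s

private lemma sum_snd2 {ι : Type*} (s : Finset ι) (f : ι → A × M × B) :
    (∑ x ∈ s, f x).2.2 = ∑ x ∈ s, (f x).2.2 :=
  map_sum ((AddMonoidHom.snd M B).comp (AddMonoidHom.snd A (M × B))) f s

private lemma tri_fst_sum {k : ℕ} (a : Fin k → A × M × B) :
    (aInfSum (triMu μA μB μM) (triSigma σA σM σB) k a).1
      = aInfSum μA σA k fun q => (a q).1 := by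
  unfold aInfSum
  rw [sum_fst]
  refine Finset.sum_congr rfl fun j _ => ?_
  rw [sum_fst]
  refine Finset.sum_congr rfl fun i _ => ?_
  split_ifs with h
  · exact congrArg (μA _) (funext fun m => tri_fst_comb μA μB μM σA σM σB a i j h m)
  · rfl

private lemma tri_snd2_sum {k : ℕ} (a : Fin k → A × M × B) :
    (aInfSum (triMu μA μB μM) (triSigma σA σM σB) k a).2.2
      = aInfSum μB σB k fun q => (a q).2.2 := by
  unfold aInfSum
  rw [sum_snd2]
  refine Finset.sum_congr rfl fun j _ => ?_
  rw [sum_snd2]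
  refine Finset.sum_congr rfl fun i _ => ?_
  split_ifs with h
  · exact congrArg (μB _) (funext fun m => tri_snd_comb μA μB μM σA σM σB a i j h m)
  · rfl

private def projP {k : ℕ} (a : Fin k → A × M × B) (p : Fin k) : Fin k → A × M × B :=
  fun q => if (q : ℕ) < (p : ℕ) then ((a q).1, 0, 0)
    else if (q : ℕ) = (p : ℕ) then (0, (a q).2.1, 0)
    else (0, 0, (a q).2.2)

private lemma projP_fst {k : ℕ} (a : Fin k → A × M × B) (p q : Fin k) :
    (projP a p q).1 = if (q : ℕ) < (p : ℕ) then (a q).1 else 0 := by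
  unfold projP; split_ifs <;> rfl

private lemma projP_snd1 {k : ℕ} (a : Fin k → A × M × B) (p q : Fin k) :
    (projP a p q).2.1 = if (q : ℕ) = (p : ℕ) then (a q).2.1 else 0 := by
  unfold projP; split_ifs <;> first | rfl | omega

private lemma projP_snd2 {k : ℕ} (a : Fin k → A × M × B) (p q : Fin k) :
    (projP a p q).2.2 = if (p : ℕ) < (q : ℕ) then (a q).2.2 else 0 := by
  unfold projP; split_ifs <;> first | rfl | omega

private lemma aInfComb_congr {V : Type*} (μ : ∀ k : ℕ, (Fin k → V) → V) (σ : V → V)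
    {k : ℕ} (b b' : Fin k → V) (i j : ℕ) (h : i + j ≤ k) (m : Fin (k - j + 1))
    (hag : ∀ q : Fin k,
      ((m : ℕ) < i ∧ (q : ℕ) = (m : ℕ)) ∨
      ((m : ℕ) = i ∧ i ≤ (q : ℕ) ∧ (q : ℕ) < i + j) ∨
      (i < (m : ℕ) ∧ (q : ℕ) = (m : ℕ) + j - 1) → b q = b' q) :
    aInfComb μ σ b i j h m = aInfComb μ σ b' i j h m := by
  unfold aInfComb
  split_ifs with h1 h2
  · rw [hag _ (Or.inl ⟨h1, rfl⟩)]
  · exact congrArg (μ j) (funext fun r =>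
      hag _ (Or.inr (Or.inl ⟨h2, by simp, by simpa using r.isLt⟩)))
  · rw [hag _ (Or.inr (Or.inr ⟨by omega, rfl⟩))]

private lemma muM_congr {i j : ℕ} {as as' : Fin i → A} {m m' : M} {bs bs' : Fin j → B}
    (h1 : ∀ r, as r = as' r) (h2 : m = m') (h3 : ∀ r, bs r = bs' r) :
    μM i j as m bs = μM i j as' m' bs' := by
  rw [funext h1, h2, funext h3]

private lemma muM_sum
    (hM0 : ∀ (i j : ℕ) (as : Fin i → A) (bs : Fin j → B), μM i j as 0 bs = 0)
    (hMadd : ∀ (i j : ℕ) (as : Fin i → A) (m m' : M) (bs : Fin j → B),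
      μM i j as (m + m') bs = μM i j as m bs + μM i j as m' bs)
    {ι : Type*} (s : Finset ι) (i j : ℕ) (as : Fin i → A) (bs : Fin j → B) (f : ι → M) :
    μM i j as (∑ x ∈ s, f x) bs = ∑ x ∈ s, μM i j as (f x) bs := by
  classical
  induction s using Finset.induction_on with
  | empty => simpa using hM0 i j as bs
  | insert _ _ hx ih => rw [Finset.sum_insert hx, Finset.sum_insert hx, hMadd _ _ _ _ _ _, ih]

private lemma triMu_snd1 {n : ℕ} (v : Fin n → A × M × B) :
    (triMu μA μB μM n v).2.1
      = ∑ p : Fin n, μM (p : ℕ) (n - 1 - (p : ℕ))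
          (fun r => (v ⟨(r : ℕ), by have := r.isLt; have := p.isLt; omega⟩).1)
          ((v p).2.1)
          (fun r => (v ⟨(p : ℕ) + 1 + (r : ℕ), by have := r.isLt; have := p.isLt; omega⟩).2.2) :=
  rfl

private lemma snd1_comb_lt {k : ℕ} (v : Fin k → A × M × B) (i j : ℕ) (h : i + j ≤ k)
    (m : Fin (k - j + 1)) (hm : (m : ℕ) < i) :
    (aInfComb (triMu μA μB μM) (triSigma σA σM σB) v i j h m).2.1
      = σM ((v ⟨(m : ℕ), by have := m.isLt; omega⟩).2.1) := by
  unfold aInfComb; rw [dif_pos hm]; rfl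

private lemma snd1_comb_gt {k : ℕ} (v : Fin k → A × M × B) (i j : ℕ) (h : i + j ≤ k)
    (m : Fin (k - j + 1)) (hm : i < (m : ℕ)) :
    (aInfComb (triMu μA μB μM) (triSigma σA σM σB) v i j h m).2.1
      = (v ⟨(m : ℕ) + j - 1, by have := m.isLt; omega⟩).2.1 := by
  unfold aInfComb; rw [dif_neg (by omega), dif_neg (by omega)]

private lemma snd1_comb_eq {k : ℕ} (v : Fin k → A × M × B) (i j : ℕ) (h : i + j ≤ k)
    (m : Fin (k - j + 1)) (hm : (m : ℕ) = i) :
    (aInfComb (triMu μA μB μM) (triSigma σA σM σB) v i j h m).2.1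
      = ∑ qin : Fin j, μM (qin : ℕ) (j - 1 - (qin : ℕ))
          (fun s => (v ⟨i + (s : ℕ), by have := s.isLt; have := qin.isLt; omega⟩).1)
          ((v ⟨i + (qin : ℕ), by have := qin.isLt; omega⟩).2.1)
          (fun s => (v ⟨i + ((qin : ℕ) + 1 + (s : ℕ)), by have := s.isLt; have := qin.isLt; omega⟩).2.2) := by
  unfold aInfComb; rw [dif_neg (by omega), dif_pos hm]; rfl
set_option maxHeartbeats 1000000 in
private lemma term_split
    (hσM0 : σM 0 = 0)
    (hM0 : ∀ (i j : ℕ) (as : Fin i → A) (bs : Fin j → B), μM i j as 0 bs = 0)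
    (hMadd : ∀ (i j : ℕ) (as : Fin i → A) (m m' : M) (bs : Fin j → B),
      μM i j as (m + m') bs = μM i j as m bs + μM i j as m' bs)
    {k : ℕ} (a : Fin k → A × M × B) (i j : ℕ) (h : i + j ≤ k) :
    (triMu μA μB μM (k - j + 1)
        (aInfComb (triMu μA μB μM) (triSigma σA σM σB) a i j h)).2.1
      = ∑ p : Fin k, (triMu μA μB μM (k - j + 1)
          (aInfComb (triMu μA μB μM) (triSigma σA σM σB) (projP a p) i j h)).2.1 := by
  simp only [triMu_snd1 μA μB μM]
  conv_rhs => rw [Finset.sum_comm]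
  refine Finset.sum_congr rfl fun pos _ => ?_
  simp only [tri_fst_comb μA μB μM σA σM σB, tri_snd_comb μA μB μM σA σM σB]
  have hposlt := pos.isLt
  rcases Nat.lt_trichotomy (pos : ℕ) i with hpi | hpi | hpi
  · -- the M input is strictly left of the inner block
    symm
    refine (Fintype.sum_eq_single (⟨(pos : ℕ), by omega⟩ : Fin k) ?_).trans ?_
    · intro p hp
      rw [snd1_comb_lt μA μB μM σA σM σB _ i j h pos hpi, projP_snd1,
        if_neg (fun hh => hp (Fin.ext hh.symm)), hσM0]
      exact hM0 _ _ _ _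
    · refine muM_congr μM (fun r => aInfComb_congr μA σA _ _ i j h _ (fun q hq => ?_))
        ?_ (fun r => aInfComb_congr μB σB _ _ i j h _ (fun q hq => ?_))
      · have hq2 : ((r : ℕ) < i ∧ (q : ℕ) = (r : ℕ)) ∨
            ((r : ℕ) = i ∧ i ≤ (q : ℕ) ∧ (q : ℕ) < i + j) ∨
            (i < (r : ℕ) ∧ (q : ℕ) = (r : ℕ) + j - 1) := hq
        have hr := r.isLt
        rw [projP_fst, if_pos (show (q : ℕ) < (pos : ℕ) by omega)]
      · rw [snd1_comb_lt μA μB μM σA σM σB _ i j h pos hpi,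
          snd1_comb_lt μA μB μM σA σM σB _ i j h pos hpi, projP_snd1, if_pos rfl]
      · have hq2 : (((pos : ℕ) + 1 + (r : ℕ)) < i ∧ (q : ℕ) = (pos : ℕ) + 1 + (r : ℕ)) ∨
            (((pos : ℕ) + 1 + (r : ℕ)) = i ∧ i ≤ (q : ℕ) ∧ (q : ℕ) < i + j) ∨
            (i < ((pos : ℕ) + 1 + (r : ℕ)) ∧
              (q : ℕ) = (pos : ℕ) + 1 + (r : ℕ) + j - 1) := hq
        have hr := r.isLt
        rw [projP_snd2, if_pos (show (pos : ℕ) < (q : ℕ) by omega)]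
  · -- the M input is inside the inner block
    have hcomb := fun v : Fin k → A × M × B =>
      snd1_comb_eq μA μB μM σA σM σB v i j h pos hpi
    simp only [hcomb, muM_sum μM hM0 hMadd]
    conv_rhs => rw [Finset.sum_comm]
    refine Finset.sum_congr rfl fun qin _ => ?_
    have hqin := qin.isLt
    symm
    refine (Fintype.sum_eq_single (⟨i + (qin : ℕ), by omega⟩ : Fin k) ?_).trans ?_
    · intro p hp
      rw [projP_snd1, if_neg (fun hh => hp (Fin.ext hh.symm)), hM0, hM0]
    · refine muM_congr μM (fun r => aInfComb_congr μA σA _ _ i j h _ (fun q hq => ?_))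
        ?_ (fun r => aInfComb_congr μB σB _ _ i j h _ (fun q hq => ?_))
      · have hq2 : ((r : ℕ) < i ∧ (q : ℕ) = (r : ℕ)) ∨
            ((r : ℕ) = i ∧ i ≤ (q : ℕ) ∧ (q : ℕ) < i + j) ∨
            (i < (r : ℕ) ∧ (q : ℕ) = (r : ℕ) + j - 1) := hq
        have hr := r.isLt
        rw [projP_fst, if_pos (show (q : ℕ) < i + (qin : ℕ) by omega)]
      · refine muM_congr μM (fun s => ?_) ?_ (fun s => ?_)
        · have hs := s.isLt
          rw [projP_fst, if_pos (show i + (s : ℕ) < i + (qin : ℕ) by omega)]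
        · rw [projP_snd1, if_pos rfl]
        · have hs := s.isLt
          rw [projP_snd2, if_pos (show i + (qin : ℕ) < i + ((qin : ℕ) + 1 + (s : ℕ)) by omega)]
      · have hq2 : (((pos : ℕ) + 1 + (r : ℕ)) < i ∧ (q : ℕ) = (pos : ℕ) + 1 + (r : ℕ)) ∨
            (((pos : ℕ) + 1 + (r : ℕ)) = i ∧ i ≤ (q : ℕ) ∧ (q : ℕ) < i + j) ∨
            (i < ((pos : ℕ) + 1 + (r : ℕ)) ∧
              (q : ℕ) = (pos : ℕ) + 1 + (r : ℕ) + j - 1) := hq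
        have hr := r.isLt
        rw [projP_snd2, if_pos (show i + (qin : ℕ) < (q : ℕ) by omega)]
  · -- the M input is strictly right of the inner block
    symm
    refine (Fintype.sum_eq_single (⟨(pos : ℕ) + j - 1, by omega⟩ : Fin k) ?_).trans ?_
    · intro p hp
      rw [snd1_comb_gt μA μB μM σA σM σB _ i j h pos hpi, projP_snd1,
        if_neg (fun hh => hp (Fin.ext hh.symm))]
      exact hM0 _ _ _ _
    · refine muM_congr μM (fun r => aInfComb_congr μA σA _ _ i j h _ (fun q hq => ?_))
        ?_ (fun r => aInfComb_congr μB σB _ _ i j h _ (fun q hq => ?_))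
      · have hq2 : ((r : ℕ) < i ∧ (q : ℕ) = (r : ℕ)) ∨
            ((r : ℕ) = i ∧ i ≤ (q : ℕ) ∧ (q : ℕ) < i + j) ∨
            (i < (r : ℕ) ∧ (q : ℕ) = (r : ℕ) + j - 1) := hq
        have hr := r.isLt
        rw [projP_fst, if_pos (show (q : ℕ) < (pos : ℕ) + j - 1 by omega)]
      · rw [snd1_comb_gt μA μB μM σA σM σB _ i j h pos hpi,
          snd1_comb_gt μA μB μM σA σM σB _ i j h pos hpi, projP_snd1, if_pos rfl]
      · have hq2 : (((pos : ℕ) + 1 + (r : ℕ)) < i ∧ (q : ℕ) = (pos : ℕ) + 1 + (r : ℕ)) ∨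
            (((pos : ℕ) + 1 + (r : ℕ)) = i ∧ i ≤ (q : ℕ) ∧ (q : ℕ) < i + j) ∨
            (i < ((pos : ℕ) + 1 + (r : ℕ)) ∧
              (q : ℕ) = (pos : ℕ) + 1 + (r : ℕ) + j - 1) := hq
        have hr := r.isLt
        rw [projP_snd2, if_pos (show (pos : ℕ) + j - 1 < (q : ℕ) by omega)]
private lemma msum_split
    (hσM0 : σM 0 = 0)
    (hM0 : ∀ (i j : ℕ) (as : Fin i → A) (bs : Fin j → B), μM i j as 0 bs = 0)
    (hMadd : ∀ (i j : ℕ) (as : Fin i → A) (m m' : M) (bs : Fin j → B),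
      μM i j as (m + m') bs = μM i j as m bs + μM i j as m' bs)
    {k : ℕ} (a : Fin k → A × M × B) :
    (aInfSum (triMu μA μB μM) (triSigma σA σM σB) k a).2.1
      = ∑ p : Fin k,
          (aInfSum (triMu μA μB μM) (triSigma σA σM σB) k (projP a p)).2.1 := by
  unfold aInfSum
  simp only [sum_snd1, apply_dite (fun x : A × M × B => x.2.1), Prod.snd_zero,
    Prod.fst_zero]
  conv_rhs => rw [Finset.sum_comm]
  refine Finset.sum_congr rfl fun j _ => ?_
  conv_rhs => rw [Finset.sum_comm]
  refine Finset.sum_congr rfl fun i _ => ?_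
  by_cases hij : i + j ≤ k
  · simp only [dif_pos hij]
    exact term_split μA μB μM σA σM σB hσM0 hM0 hMadd a i j hij
  · simp [dif_neg hij]

private lemma cast_aInfSum {V : Type*} [AddCommGroup V] (μ : ∀ k : ℕ, (Fin k → V) → V)
    (σ : V → V) {k k' : ℕ} (hk : k = k') (b : Fin k' → V) :
    aInfSum μ σ k (fun q => b (Fin.cast hk q)) = aInfSum μ σ k' b := by
  subst hk; rfl

private lemma proj_eq_pure {k : ℕ} (a : Fin k → A × M × B) (p : Fin k) :
    projP a p = fun q => pureInput (p : ℕ) (k - 1 - (p : ℕ))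
        (fun r => (a ⟨(r : ℕ), by have := r.isLt; have := p.isLt; omega⟩).1)
        ((a p).2.1)
        (fun r => (a ⟨(p : ℕ) + 1 + (r : ℕ), by have := r.isLt; have := p.isLt; omega⟩).2.2)
        (Fin.cast (by have := p.isLt; omega) q) := by
  funext q
  unfold projP pureInput
  simp only [Fin.coe_cast]
  split_ifs with h1 h2
  · rfl
  · have hq : q = p := Fin.ext h2
    subst hq; rfl
  · conv_lhs => rw [show q = (⟨(p : ℕ) + 1 + ((q : ℕ) - (p : ℕ) - 1),
      by have := q.isLt; omega⟩ : Fin k) from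
      Fin.ext (show (q : ℕ) = (p : ℕ) + 1 + ((q : ℕ) - (p : ℕ) - 1) by omega)]

private lemma proj_vanish
    (hbimod : ∀ (i j : ℕ) (as : Fin i → A) (m : M) (bs : Fin j → B),
      (aInfSum (triMu μA μB μM) (triSigma σA σM σB) (i + 1 + j)
        (pureInput i j as m bs)).2.1 = 0)
    {k : ℕ} (a : Fin k → A × M × B) (p : Fin k) :
    (aInfSum (triMu μA μB μM) (triSigma σA σM σB) k (projP a p)).2.1 = 0 := by
  rw [proj_eq_pure a p, cast_aInfSum]
  exact hbimod (p : ℕ) (k - 1 - (p : ℕ)) _ _ _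
end TriangleAux

/-- if `A` and `B` are `A∞`-algebras and `M` is an `A∞` `A`-`B`-bimodule
(the bimodule equations being expressed as the vanishing of the `M`-component of the
`A∞`-sum of `T(M)` on inputs with exactly one `M`-entry), then the triangle algebra
`T(M) = A ⊕ M[-1] ⊕ B` satisfies the `A∞`-equations. -/
theorem triangle_algebra_satisfies_AInfty_equations
    {A M B : Type*} [AddCommGroup A] [AddCommGroup M] [AddCommGroup B]
    (μA : ∀ k : ℕ, (Fin k → A) → A) (μB : ∀ k : ℕ, (Fin k → B) → B)
    (μM : ∀ i j : ℕ, (Fin i → A) → M → (Fin j → B) → M)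
    (σA : A → A) (σM : M → M) (σB : B → B)
    (hA : AInfEq μA σA) (hB : AInfEq μB σB)
    (hσM0 : σM 0 = 0)
    (hM0 : ∀ (i j : ℕ) (as : Fin i → A) (bs : Fin j → B), μM i j as 0 bs = 0)
    (hMadd : ∀ (i j : ℕ) (as : Fin i → A) (m m' : M) (bs : Fin j → B),
      μM i j as (m + m') bs = μM i j as m bs + μM i j as m' bs)
    (hbimod : ∀ (i j : ℕ) (as : Fin i → A) (m : M) (bs : Fin j → B),
      (aInfSum (triMu μA μB μM) (triSigma σA σM σB) (i + 1 + j)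
        (pureInput i j as m bs)).2.1 = 0) :
    AInfEq (triMu μA μB μM) (triSigma σA σM σB) := by
  intro k a
  refine Prod.ext ?_ (Prod.ext ?_ ?_)
  · rw [tri_fst_sum μA μB μM σA σM σB a]
    exact hA k _
  · rw [msum_split μA μB μM σA σM σB hσM0 hM0 hMadd a]
    exact Finset.sum_eq_zero fun p _ =>
      proj_vanish μA μB μM σA σM σB hbimod a p
  · rw [tri_snd2_sum μA μB μM σA σM σB a]
    exact hB k _
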